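/- The agent-alternating formulas ◇_a(◇_b(p ∨ ¬p) ∧ □_b □_a p) → p and ◇_a(◇_b(p ∨ ¬p) ∧ □_b ◇_a p) → ◇_a p (for distinct agents a, b) are theorems of KB5; the first is not a theorem of S4 and the second is not a theorem of B. In particular KB5|_alt is contained neither in S4|_alt nor in B|_alt. -/

import Mathlib

/-- Formulas of the multi-agent modal language: p | ¬φ | (φ ∧ φ) | □_a φ. -/
inductive Fm (A : Type) : Type
  | atom : ℕ → Fm A
  | neg : Fm A → Fm A
  | and : Fm A → Fm A → Fm A
  | box : A → Fm A → Fm A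

namespace Fm
def imp {A : Type} (φ ψ : Fm A) : Fm A := .neg (.and φ (.neg ψ))
def or {A : Type} (φ ψ : Fm A) : Fm A := .neg (.and (.neg φ) (.neg ψ))
def dia {A : Type} (a : A) (φ : Fm A) : Fm A := .neg (.box a (.neg φ))
end Fm

/-- Kripke models with agent set `A` and world type `W`. -/
structure Kripke (A W : Type) where
  R : A → W → W → Prop
  V : ℕ → W → Prop

/-- Satisfaction. -/
def Sat {A W : Type} (M : Kripke A W) : W → Fm A → Prop
  | w, .atom n => M.V n w
  | w, .neg φ => ¬ Sat M w φ
  | w, .and φ ψ => Sat M w φ ∧ Sat M w ψ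
  | w, .box a φ => ∀ v, M.R a w v → Sat M v φ

/-- The fragments L_{-a}: φ ::= p | □_x ψ (x ≠ a, ψ ∈ L_{-x}) | ¬φ | (φ ∧ φ). -/
inductive LMinus {A : Type} : A → Fm A → Prop
  | atom (a : A) (n : ℕ) : LMinus a (.atom n)
  | box {a x : A} {ψ : Fm A} : x ≠ a → LMinus x ψ → LMinus a (.box x ψ)
  | neg {a : A} {φ : Fm A} : LMinus a φ → LMinus a (.neg φ)
  | and {a : A} {φ ψ : Fm A} : LMinus a φ → LMinus a ψ → LMinus a (.and φ ψ)

/-- The agent-alternating fragment L_alt. -/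
inductive LAlt {A : Type} : Fm A → Prop
  | atom (n : ℕ) : LAlt (.atom n)
  | chi {φ : Fm A} (a : A) : LMinus a φ → LAlt φ
  | neg {φ : Fm A} : LAlt φ → LAlt (.neg φ)
  | and {φ ψ : Fm A} : LAlt φ → LAlt ψ → LAlt (.and φ ψ)

/-- The fragments L_X for X ⊆ A: φ ::= p | □_x ψ (x ∈ X, ψ ∈ L_{X\{x}}) | ¬φ | (φ ∧ φ). -/
inductive LX {A : Type} : Set A → Fm A → Prop
  | atom (X : Set A) (n : ℕ) : LX X (.atom n)
  | box {X : Set A} {x : A} {ψ : Fm A} : x ∈ X → LX (X \ {x}) ψ → LX X (.box x ψ)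
  | neg {X : Set A} {φ : Fm A} : LX X φ → LX X (.neg φ)
  | and {X : Set A} {φ ψ : Fm A} : LX X φ → LX X ψ → LX X (.and φ ψ)

/-- Immediate subformula relation. -/
inductive ISub {A : Type} : Fm A → Fm A → Prop
  | neg (φ : Fm A) : ISub φ (.neg φ)
  | andL (φ ψ : Fm A) : ISub φ (.and φ ψ)
  | andR (φ ψ : Fm A) : ISub ψ (.and φ ψ)
  | box (a : A) (φ : Fm A) : ISub φ (.box a φ)

/-- An occurrence type of φ: a nonempty sequence of formulas, each an immediate
subformula of the next, ending in φ. -/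
def IsOcc {A : Type} (l : List (Fm A)) (φ : Fm A) : Prop :=
  l ≠ [] ∧ l.getLast? = some φ ∧ List.Chain' ISub l

/-- A □_a-occurrence of φ. -/
def IsBoxOcc {A : Type} (a : A) (l : List (Fm A)) (φ : Fm A) : Prop :=
  IsOcc l φ ∧ ∃ β, l.head? = some (Fm.box a β)

/-- O ≤ O' iff O' is a suffix of O (prefix-extension order on occurrences). -/
def OccLe {A : Type} (O O' : List (Fm A)) : Prop := O' <:+ O

/-- φ is agent-alternating: between any two nested □_a-occurrences there is a
□_b-occurrence for some b ≠ a. -/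
def AgentAlternating {A : Type} (φ : Fm A) : Prop :=
  ∀ (a : A) (O O' : List (Fm A)), IsBoxOcc a O φ → IsBoxOcc a O' φ → O ≠ O' → OccLe O O' →
    ∃ b : A, b ≠ a ∧ ∃ O'' : List (Fm A), IsBoxOcc b O'' φ ∧ OccLe O O'' ∧ OccLe O'' O'

/-- φ is agent-nonrepeating: no □_a-occurrence lies below another □_a-occurrence. -/
def AgentNonrepeating {A : Type} (φ : Fm A) : Prop :=
  ∀ (a : A) (O O' : List (Fm A)), IsBoxOcc a O φ → IsBoxOcc a O' φ → O ≠ O' → ¬ OccLe O O'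

/-- Boolean evaluation treating atoms and boxed formulas as atomic. -/
def evalP {A : Type} (v : Fm A → Bool) : Fm A → Bool
  | .neg φ => ! evalP v φ
  | .and φ ψ => evalP v φ && evalP v ψ
  | φ => v φ

/-- Propositional tautologies (in the signature ¬, ∧, with boxed formulas atomic). -/
def Taut {A : Type} (φ : Fm A) : Prop := ∀ v : Fm A → Bool, evalP v φ = true

/-- Provability in the smallest normal modal logic containing the axioms `Ax`. -/
inductive Prv {A : Type} (Ax : Fm A → Prop) : Fm A → Prop
  | taut {φ : Fm A} : Taut φ → Prv Ax φ
  | ax {φ : Fm A} : Ax φ → Prv Ax φ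
  | k (a : A) (φ ψ : Fm A) :
      Prv Ax (Fm.imp (.box a (Fm.imp φ ψ)) (Fm.imp (.box a φ) (.box a ψ)))
  | mp {φ ψ : Fm A} : Prv Ax (Fm.imp φ ψ) → Prv Ax φ → Prv Ax ψ
  | nec {φ : Fm A} (a : A) : Prv Ax φ → Prv Ax (.box a φ)

def AxNone {A : Type} : Fm A → Prop := fun _ => False
def AxT {A : Type} : Fm A → Prop := fun χ => ∃ (a : A) (φ : Fm A), χ = Fm.imp (.box a φ) φ
def Ax4 {A : Type} : Fm A → Prop := fun χ => ∃ (a : A) (φ : Fm A), χ = Fm.imp (.box a φ) (.box a (.box a φ))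
def Ax5 {A : Type} : Fm A → Prop := fun χ => ∃ (a : A) (φ : Fm A), χ = Fm.imp (.neg (.box a φ)) (.box a (.neg (.box a φ)))
def AxB {A : Type} : Fm A → Prop := fun χ => ∃ (a : A) (φ : Fm A), χ = Fm.imp φ (.box a (Fm.dia a φ))
def AxD {A : Type} : Fm A → Prop := fun χ => ∃ (a : A) (φ : Fm A), χ = Fm.imp (.box a φ) (Fm.dia a φ)

def Ser {W : Type} (R : W → W → Prop) : Prop := ∀ u, ∃ v, R u v
def Eucl {W : Type} (R : W → W → Prop) : Prop := ∀ u v w, R u v → R u w → R v w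

/-- Agent-alternating bisimulation family (`none` plays the role of `alt`). -/
def IsAAFamily {A W1 W2 : Type} (M : Kripke A W1) (N : Kripke A W2)
    (f : Option A → W1 → W2 → Prop) : Prop :=
  ∀ (o : Option A) (u : W1) (v : W2), f o u v →
    (∀ n, M.V n u ↔ N.V n v) ∧
    (∀ b : A, o ≠ some b →
      (∀ u', M.R b u u' → ∃ v', N.R b v v' ∧ f (some b) u' v') ∧
      (∀ v', N.R b v v' → ∃ u', M.R b u u' ∧ f (some b) u' v'))

/-- Agent-nonrepeating bisimulation family. -/
def IsNRFamily {A W1 W2 : Type} (M : Kripke A W1) (N : Kripke A W2)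
    (f : Set A → W1 → W2 → Prop) : Prop :=
  ∀ (X : Set A) (u : W1) (v : W2), f X u v →
    (∀ n, M.V n u ↔ N.V n v) ∧
    (∀ x ∈ X,
      (∀ u', M.R x u u' → ∃ v', N.R x v v' ∧ f (X \ {x}) u' v') ∧
      (∀ v', N.R x v v' → ∃ u', M.R x u u' ∧ f (X \ {x}) u' v'))

/-- One step in an agent-alternating sequence. -/
def Step {A W : Type} (M : Kripke A W) : (Option A × W) → (Option A × W) → Prop :=
  fun x y => x.1 ≠ y.1 ∧ ∃ b : A, y.1 = some b ∧ M.R b x.2 y.2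

/-- Valid worlds of an agent-alternating unraveling. -/
def ValidSeq {A W : Type} (M : Kripke A W) (s : List (Option A × W)) : Prop :=
  s ≠ [] ∧ (∃ w, s.head? = some (none, w)) ∧ (∀ x ∈ s.tail, x.1 ≠ none) ∧
    List.Chain' (Step M) s

def UWorld {A W : Type} (M : Kripke A W) : Type := {s : List (Option A × W) // ValidSeq M s}

def lastEntry {A W : Type} {M : Kripke A W} (s : UWorld M) : Option A × W :=
  s.val.getLast s.prop.1

/-- N is an agent-alternating unraveling of M. -/
def IsAAUnraveling {A W : Type} (M : Kripke A W) (N : Kripke A (UWorld M)) : Prop :=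
  (∀ (b : A) (s : UWorld M), (lastEntry s).1 ≠ some b →
    ∀ t : UWorld M, N.R b s t ↔ ∃ w', M.R b (lastEntry s).2 w' ∧ t.val = s.val ++ [(some b, w')])
  ∧ (∀ n (s : UWorld M), N.V n s ↔ M.V n (lastEntry s).2)

/-- The canonical relation family between M and any of its agent-alternating unravelings. -/
def PFam {A W : Type} (M : Kripke A W) : Option A → W → UWorld M → Prop :=
  fun o u s => lastEntry s = (o, u)

/-- Finite agent-alternating bisimulation relations: `BisimN M N n (some a)` is ⇆_{-a}^n,
`BisimN M N n none` is ⇆_alt^n. -/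
def BisimN {A W1 W2 : Type} (M : Kripke A W1) (N : Kripke A W2) :
    ℕ → Option A → W1 → W2 → Prop
  | 0, _, u, v => ∀ n, M.V n u ↔ N.V n v
  | (n+1), o, u, v => (∀ m, M.V m u ↔ N.V m v) ∧
      ∀ b : A, o ≠ some b →
        (∀ u', M.R b u u' → ∃ v', N.R b v v' ∧ BisimN M N n (some b) u' v') ∧
        (∀ v', N.R b v v' → ∃ u', M.R b u u' ∧ BisimN M N n (some b) u' v')

/-- Standard n-bisimilarity. -/
def StdBisimN {A W1 W2 : Type} (M : Kripke A W1) (N : Kripke A W2) :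
    ℕ → W1 → W2 → Prop
  | 0, u, v => ∀ n, M.V n u ↔ N.V n v
  | (n+1), u, v => (∀ m, M.V m u ↔ N.V m v) ∧
      ∀ b : A,
        (∀ u', M.R b u u' → ∃ v', N.R b v v' ∧ StdBisimN M N n u' v') ∧
        (∀ v', N.R b v v' → ∃ u', M.R b u u' ∧ StdBisimN M N n u' v')

namespace Stmt7Aux
open Fm

variable {A : Type} {Ax : Fm A → Prop}

/-- tactic-friendly taut application -/
lemma prv_taut (φ : Fm A) (h : Taut φ) : Prv Ax φ := Prv.taut h

lemma imp_trans {φ ψ χ : Fm A} (h1 : Prv Ax (imp φ ψ)) (h2 : Prv Ax (imp ψ χ)) :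
    Prv Ax (imp φ χ) := by
  have t : Taut (imp (imp φ ψ) (imp (imp ψ χ) (imp φ χ))) := by
    intro v
    simp only [Fm.imp, evalP]
    cases evalP v φ <;> cases evalP v ψ <;> cases evalP v χ <;> rfl
  exact Prv.mp (Prv.mp (Prv.taut t) h1) h2

lemma contrapose {φ ψ : Fm A} (h : Prv Ax (imp φ ψ)) : Prv Ax (imp (neg ψ) (neg φ)) := by
  have t : Taut (imp (imp φ ψ) (imp (neg ψ) (neg φ))) := by
    intro v
    simp only [Fm.imp, evalP]
    cases evalP v φ <;> cases evalP v ψ <;> rfl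
  exact Prv.mp (Prv.taut t) h

lemma dni (φ : Fm A) : Prv Ax (imp φ (neg (neg φ))) := by
  apply prv_taut; intro v
  simp only [Fm.imp, evalP]
  cases evalP v φ <;> rfl

lemma dne (φ : Fm A) : Prv Ax (imp (neg (neg φ)) φ) := by
  apply prv_taut; intro v
  simp only [Fm.imp, evalP]
  cases evalP v φ <;> rfl

lemma mono_box (a : A) {φ ψ : Fm A} (h : Prv Ax (imp φ ψ)) :
    Prv Ax (imp (box a φ) (box a ψ)) :=
  Prv.mp (Prv.k a φ ψ) (Prv.nec a h)

lemma mono_dia (a : A) {φ ψ : Fm A} (h : Prv Ax (imp φ ψ)) :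
    Prv Ax (imp (dia a φ) (dia a ψ)) :=
  contrapose (mono_box a (contrapose h))

/-- K-combination: □φ ∧ ◇ψ → ◇(φ ∧ ψ) -/
lemma kcomb (a : A) (φ ψ : Fm A) :
    Prv Ax (imp (.and (box a φ) (dia a ψ)) (dia a (.and φ ψ))) := by
  have t1 : Prv Ax (imp φ (imp (neg (.and φ ψ)) (neg ψ))) := by
    apply prv_taut; intro v
    simp only [Fm.imp, evalP]
    cases evalP v φ <;> cases evalP v ψ <;> rfl
  have h2 : Prv Ax (imp (box a φ) (imp (box a (neg (.and φ ψ))) (box a (neg ψ)))) :=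
    imp_trans (mono_box a t1) (Prv.k a _ _)
  -- rearrange: (X → (Y → Z)) → (X ∧ ¬Z → ¬Y)
  have t2 : Taut (imp (imp (box a φ) (imp (box a (neg (.and φ ψ))) (box a (neg ψ))))
      (imp (.and (box a φ) (neg (box a (neg ψ)))) (neg (box a (neg (.and φ ψ)))))) := by
    intro v
    simp only [Fm.imp, evalP]
    cases v (box a φ) <;> cases v (box a (neg (.and φ ψ))) <;>
      cases v (box a (neg ψ)) <;> rfl
  exact Prv.mp (Prv.taut t2) h2

section KB5
variable (K5 : (Fm A → Prop))

def isK5 (Ax : Fm A → Prop) : Prop := ∀ χ, (AxB χ ∨ Ax5 χ) → Ax χ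

variable (hK5 : isK5 Ax)
include hK5

lemma axB (a : A) (φ : Fm A) : Prv Ax (imp φ (box a (dia a φ))) :=
  Prv.ax (hK5 _ (Or.inl ⟨a, φ, rfl⟩))

lemma ax5 (a : A) (φ : Fm A) :
    Prv Ax (imp (neg (box a φ)) (box a (neg (box a φ)))) :=
  Prv.ax (hK5 _ (Or.inr ⟨a, φ, rfl⟩))

/-- ◇□φ → φ -/
lemma db (a : A) (φ : Fm A) : Prv Ax (imp (dia a (box a φ)) φ) := by
  have h1 : Prv Ax (imp (neg φ) (box a (dia a (neg φ)))) := axB hK5 a (neg φ)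
  have h2 : Prv Ax (imp (neg (box a (dia a (neg φ)))) (neg (neg φ))) := contrapose h1
  have h3 : Prv Ax (imp (dia a (box a φ)) (dia a (box a (neg (neg φ))))) :=
    mono_dia a (mono_box a (dni φ))
  have h4 : Prv Ax (imp (dia a (box a (neg (neg φ)))) (neg (neg φ))) := h2
  exact imp_trans (imp_trans h3 h4) (dne φ)

/-- ◇□φ → □φ -/
lemma c5 (a : A) (φ : Fm A) : Prv Ax (imp (dia a (box a φ)) (box a φ)) :=
  imp_trans (contrapose (ax5 hK5 a φ)) (dne (box a φ))

/-- 4: □φ → □□φ -/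
lemma four (a : A) (φ : Fm A) : Prv Ax (imp (box a φ) (box a (box a φ))) :=
  imp_trans (axB hK5 a (box a φ)) (mono_box a (c5 hK5 a φ))

/-- ◇◇φ → ◇φ -/
lemma dia4 (a : A) (φ : Fm A) : Prv Ax (imp (dia a (dia a φ)) (dia a φ)) := by
  have h1 : Prv Ax (imp (box a (neg φ)) (box a (neg (neg (box a (neg φ)))))) :=
    imp_trans (four hK5 a (neg φ)) (mono_box a (dni (box a (neg φ))))
  exact contrapose h1

/-- (◇τ ∧ □q) → q -/
lemma serT (b : A) (τ q : Fm A) : Prv Ax (imp (.and (dia b τ) (box b q)) q) := by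
  have h4 : Prv Ax (imp (box b q) (box b (box b q))) := four hK5 b q
  -- (◇τ ∧ □q) → (□□q ∧ ◇τ)
  have t1 : Taut (imp (imp (box b q) (box b (box b q)))
      (imp (.and (dia b τ) (box b q)) (.and (box b (box b q)) (dia b τ)))) := by
    intro v
    simp only [Fm.imp, Fm.dia, evalP]
    cases v (box b (neg τ)) <;> cases v (box b q) <;>
      cases v (box b (box b q)) <;> rfl
  have h1 : Prv Ax (imp (.and (dia b τ) (box b q)) (.and (box b (box b q)) (dia b τ))) :=
    Prv.mp (Prv.taut t1) h4
  have h2 : Prv Ax (imp (.and (box b (box b q)) (dia b τ)) (dia b (.and (box b q) τ))) :=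
    kcomb b (box b q) τ
  have t3 : Prv Ax (imp (.and (box b q) τ) (box b q)) := by
    apply prv_taut; intro v
    simp only [Fm.imp, evalP]
    cases v (box b q) <;> cases evalP v τ <;> rfl
  have h3 : Prv Ax (imp (dia b (.and (box b q) τ)) (dia b (box b q))) := mono_dia b t3
  exact imp_trans (imp_trans (imp_trans h1 h2) h3) (db hK5 b q)

end KB5

/-! ### Semantics -/

lemma sat_taut {W : Type} (M : Kripke A W) (w : W) {φ : Fm A} (h : Taut φ) :
    Sat M w φ := by
  classical
  set v : Fm A → Bool := fun χ => decide (Sat M w χ) with hv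
  have key : ∀ ψ : Fm A, Sat M w ψ ↔ evalP v ψ = true := by
    intro ψ
    induction ψ with
    | atom n => simp [Sat, evalP, hv]; exact decide_eq_true_iff.symm
    | neg χ ih => simp [Sat, evalP, ih]
    | and χ ρ ih1 ih2 => simp [Sat, evalP, ih1, ih2]
    | box a χ ih => simp [Sat, evalP, hv]; exact decide_eq_true_iff.symm
  exact (key φ).2 (h v)

lemma sat_imp {W : Type} (M : Kripke A W) (w : W) (φ ψ : Fm A) :
    Sat M w (imp φ ψ) ↔ (Sat M w φ → Sat M w ψ) := by
  simp only [Fm.imp, Sat]; tauto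

lemma sat_dia {W : Type} (M : Kripke A W) (w : W) (a : A) (φ : Fm A) :
    Sat M w (dia a φ) ↔ ∃ v, M.R a w v ∧ Sat M v φ := by
  simp only [Fm.dia, Sat]; push_neg; tauto

lemma soundness {W : Type} (M : Kripke A W) (hAx : ∀ φ, Ax φ → ∀ w, Sat M w φ)
    {φ : Fm A} (h : Prv Ax φ) : ∀ w, Sat M w φ := by
  induction h with
  | @taut φ h => exact fun w => sat_taut M w h
  | ax h => exact hAx _ h
  | k a φ ψ =>
    intro w
    rw [sat_imp, sat_imp]
    intro h1 h2
    intro u hu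
    exact (sat_imp M u φ ψ).1 (h1 u hu) (h2 u hu)
  | mp h1 h2 ih1 ih2 => exact fun w => (sat_imp M w _ _).1 (ih1 w) (ih2 w)
  | nec a h ih => exact fun w u _ => ih u

end Stmt7Aux

open Stmt7Aux Fm
/-- the two displayed agent-alternating formulas are theorems of KB5; the first
is not a theorem of S4 and the second not of B; hence KB5|_alt ⊄ S4|_alt and KB5|_alt ⊄ B|_alt. -/
theorem stmt7 {A : Type} (a b : A) (hab : a ≠ b) :
    (LAlt (Fm.imp (Fm.dia a (.and (Fm.dia b (Fm.or (.atom 0) (.neg (.atom 0))))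
        (.box b (.box a (.atom 0))))) (.atom 0)) ∧
     LAlt (Fm.imp (Fm.dia a (.and (Fm.dia b (Fm.or (.atom 0) (.neg (.atom 0))))
        (.box b (Fm.dia a (.atom 0))))) (Fm.dia a (.atom 0)))) ∧
    Prv (fun χ => AxB χ ∨ Ax5 χ)
      (Fm.imp (Fm.dia a (.and (Fm.dia b (Fm.or (.atom 0) (.neg (.atom 0))))
        (.box b (.box a (.atom 0))))) (.atom 0)) ∧
    Prv (fun χ => AxB χ ∨ Ax5 χ)
      (Fm.imp (Fm.dia a (.and (Fm.dia b (Fm.or (.atom 0) (.neg (.atom 0))))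
        (.box b (Fm.dia a (.atom 0))))) (Fm.dia a (.atom 0))) ∧
    ¬ Prv (fun χ => AxT χ ∨ Ax4 χ)
      (Fm.imp (Fm.dia a (.and (Fm.dia b (Fm.or (.atom 0) (.neg (.atom 0))))
        (.box b (.box a (.atom 0))))) (.atom 0)) ∧
    ¬ Prv (fun χ => AxT χ ∨ AxB χ)
      (Fm.imp (Fm.dia a (.and (Fm.dia b (Fm.or (.atom 0) (.neg (.atom 0))))
        (.box b (Fm.dia a (.atom 0))))) (Fm.dia a (.atom 0))) ∧
    (∃ φ : Fm A, LAlt φ ∧ Prv (fun χ => AxB χ ∨ Ax5 χ) φ ∧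
      ¬ Prv (fun χ => AxT χ ∨ Ax4 χ) φ) ∧
    (∃ φ : Fm A, LAlt φ ∧ Prv (fun χ => AxB χ ∨ Ax5 χ) φ ∧
      ¬ Prv (fun χ => AxT χ ∨ AxB χ) φ) := by
  have hK5 : isK5 (fun χ : Fm A => AxB χ ∨ Ax5 χ) := fun _ h => h
  set p : Fm A := .atom 0 with hp
  set τ : Fm A := Fm.or p (.neg p) with hτ
  -- LAlt proofs
  have la1 : LAlt (Fm.imp (Fm.dia a (.and (Fm.dia b τ) (.box b (.box a p)))) p) := by
    apply LAlt.chi b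
    simp only [Fm.imp, Fm.dia, Fm.or, hp, hτ]
    repeat'
      first
        | exact LMinus.atom _ _
        | apply LMinus.and
        | apply LMinus.neg
        | apply LMinus.box hab
        | apply LMinus.box (Ne.symm hab)
  have la2 : LAlt (Fm.imp (Fm.dia a (.and (Fm.dia b τ) (.box b (Fm.dia a p)))) (Fm.dia a p)) := by
    apply LAlt.chi b
    simp only [Fm.imp, Fm.dia, Fm.or, hp, hτ]
    repeat'
      first
        | exact LMinus.atom _ _
        | apply LMinus.and
        | apply LMinus.neg
        | apply LMinus.box hab
        | apply LMinus.box (Ne.symm hab)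
  -- KB5 provability
  have prv1 : Prv (fun χ : Fm A => AxB χ ∨ Ax5 χ)
      (Fm.imp (Fm.dia a (.and (Fm.dia b τ) (.box b (.box a p)))) p) :=
    imp_trans (mono_dia a (serT hK5 b τ (.box a p))) (db hK5 a p)
  have prv2 : Prv (fun χ : Fm A => AxB χ ∨ Ax5 χ)
      (Fm.imp (Fm.dia a (.and (Fm.dia b τ) (.box b (Fm.dia a p)))) (Fm.dia a p)) :=
    imp_trans (mono_dia a (serT hK5 b τ (Fm.dia a p))) (dia4 hK5 a p)
  -- S4 countermodel
  have ns4 : ¬ Prv (fun χ : Fm A => AxT χ ∨ Ax4 χ)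
      (Fm.imp (Fm.dia a (.and (Fm.dia b τ) (.box b (.box a p)))) p) := by
    intro hprv
    set M : Kripke A Bool :=
      ⟨fun x u v => (x = a ∧ (u = true → v = true)) ∨ (x ≠ a ∧ u = v),
       fun _ w => w = true⟩ with hM
    have hAx : ∀ χ, (AxT χ ∨ Ax4 χ) → ∀ w, Sat M w χ := by
      rintro χ (⟨x, φ, rfl⟩ | ⟨x, φ, rfl⟩) w
      · rw [sat_imp]
        intro h
        apply h w
        by_cases hx : x = a
        · exact Or.inl ⟨hx, fun h => h⟩
        · exact Or.inr ⟨hx, rfl⟩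
      · rw [sat_imp]
        intro h u hu z hz
        apply h
        rcases hu with ⟨hx, h1⟩ | ⟨hx, rfl⟩
        · rcases hz with ⟨_, h2⟩ | ⟨hx', rfl⟩
          · exact Or.inl ⟨hx, fun hw => h2 (h1 hw)⟩
          · exact Or.inl ⟨hx, h1⟩
        · exact hz
    have hs := soundness M hAx hprv false
    rw [sat_imp] at hs
    have hant : Sat M false (Fm.dia a (.and (Fm.dia b τ) (.box b (.box a p)))) := by
      rw [sat_dia]
      refine ⟨true, Or.inl ⟨rfl, fun _ => rfl⟩, ?_, ?_⟩
      · rw [sat_dia]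
        refine ⟨true, Or.inr ⟨Ne.symm hab, rfl⟩, ?_⟩
        simp [hτ, hp, Fm.or, Sat, hM]
      · intro u hu z hz
        rcases hu with ⟨hx, _⟩ | ⟨_, rfl⟩
        · exact absurd hx (Ne.symm hab)
        · rcases hz with ⟨_, h1⟩ | ⟨hx', rfl⟩
          · exact h1 rfl
          · exact absurd rfl hx'
    have := hs hant
    simp [hp, Sat, hM] at this
  -- B countermodel
  have nb : ¬ Prv (fun χ : Fm A => AxT χ ∨ AxB χ)
      (Fm.imp (Fm.dia a (.and (Fm.dia b τ) (.box b (Fm.dia a p)))) (Fm.dia a p)) := by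
    intro hprv
    set M : Kripke A (Fin 3) :=
      ⟨fun x u v => (x = a ∧ (u.val ≤ v.val + 1 ∧ v.val ≤ u.val + 1)) ∨ (x ≠ a ∧ u = v),
       fun _ w => w = 2⟩ with hM
    have hsymm : ∀ x u v, M.R x u v → M.R x v u := by
      rintro x u v (⟨hx, h1, h2⟩ | ⟨hx, rfl⟩)
      · exact Or.inl ⟨hx, h2, h1⟩
      · exact Or.inr ⟨hx, rfl⟩
    have hAx : ∀ χ, (AxT χ ∨ AxB χ) → ∀ w, Sat M w χ := by
      rintro χ (⟨x, φ, rfl⟩ | ⟨x, φ, rfl⟩) w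
      · rw [sat_imp]
        intro h
        apply h w
        by_cases hx : x = a
        · exact Or.inl ⟨hx, by omega, by omega⟩
        · exact Or.inr ⟨hx, rfl⟩
      · rw [sat_imp]
        intro h u hu
        rw [sat_dia]
        exact ⟨w, hsymm x w u hu, h⟩
    have hs := soundness M hAx hprv 0
    rw [sat_imp] at hs
    have hant : Sat M (0 : Fin 3) (Fm.dia a (.and (Fm.dia b τ) (.box b (Fm.dia a p)))) := by
      rw [sat_dia]
      refine ⟨1, Or.inl ⟨rfl, by decide, by decide⟩, ?_, ?_⟩
      · rw [sat_dia]
        refine ⟨1, Or.inr ⟨Ne.symm hab, rfl⟩, ?_⟩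
        simp [hτ, hp, Fm.or, Sat, hM]
      · intro u hu
        rcases hu with ⟨hx, _⟩ | ⟨_, rfl⟩
        · exact absurd hx (Ne.symm hab)
        · rw [sat_dia]
          refine ⟨2, Or.inl ⟨rfl, by decide, by decide⟩, ?_⟩
          simp [hp, Sat, hM]
    have hcon := hs hant
    rw [sat_dia] at hcon
    obtain ⟨z, hz, hpz⟩ := hcon
    simp only [hp, Sat, hM] at hpz
    subst hpz
    rcases hz with ⟨_, _, h2⟩ | ⟨hx', h⟩
    · revert h2; decide
    · exact absurd rfl hx'
  exact ⟨⟨la1, la2⟩, prv1, prv2, ns4, nb, ⟨_, la1, prv1, ns4⟩, ⟨_, la2, prv2, nb⟩⟩
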